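/- Adjointness of vertex operators for the deformed inner product: with (·,·)_h defined by (p_μ,p_ν)_h = δ_{μν} 𝔷(μ) φ_h(p_μ), the adjoint of Γ_-(f) (multiplication by Ω(p_1 f)) is Γ_+(hf) (the substitution homomorphism p_k ↦ p_k + h_k f_k), i.e. (Γ_-(f) u, v)_h = (u, Γ_+(hf) v)_h for all u, v ∈ Λ. -/

import Mathlib

open MvPolynomial

/-- Λ = ℂ[p_1,p_2,...]; variable `X k` is p_{k+1}. -/
abbrev SymFun : Type := MvPolynomial ℕ ℂ

/-- The element Ω(p₁f) = exp(∑_{k≥1} (f_k/k) p_k) of the completion Λ̂, as a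
power series in the p-variables (`F k` encodes f_{k+1}); multiplication by it
is the vertex operator Γ_-(f). -/
noncomputable def OmegaElt (F : ℕ → ℂ) : MvPowerSeries ℕ ℂ :=
  fun d => d.prod fun k e => (F k / (k + 1)) ^ e / (e.factorial : ℂ)

/-- The deformed pairing (p_μ,p_ν)_h = δ_{μν} 𝔷(μ) φ_h(p_μ), extended to a
pairing of a power series against a polynomial (`h k` encodes h_{k+1}):
(S, Q)_h = ∑_d S_d Q_d 𝔷(d) ∏_k h_k^{d_k}. -/
noncomputable def hallH (h : ℕ → ℂ) (S : MvPowerSeries ℕ ℂ) (Q : SymFun) : ℂ :=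
  ∑ d ∈ Q.support, S d * Q.coeff d *
    (d.prod fun k e => ((k : ℂ) + 1) ^ e * (e.factorial : ℂ) * h k ^ e)

/-- Γ_+(hf): the substitution homomorphism p_k ↦ p_k + h_k f_k. -/
noncomputable def GammaPlusHF (h F : ℕ → ℂ) : SymFun →ₐ[ℂ] SymFun :=
  aeval fun k => X k + C (h k * F k)

/-! ### Auxiliary development -/

noncomputable def wH (h : ℕ → ℂ) (d : ℕ →₀ ℕ) : ℂ :=
  d.prod fun k e => ((k : ℂ) + 1) ^ e * (e.factorial : ℂ) * h k ^ e

lemma hallH_def (h : ℕ → ℂ) (S : MvPowerSeries ℕ ℂ) (Q : SymFun) :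
    hallH h S Q = ∑ d ∈ Q.support, MvPowerSeries.coeff d S * Q.coeff d * wH h d := rfl

noncomputable def Dop (n : ℕ) (S : MvPowerSeries ℕ ℂ) : MvPowerSeries ℕ ℂ :=
  fun d => ((d n : ℂ) + 1) * S (d + Finsupp.single n 1)

lemma coeff_Dop (n : ℕ) (S : MvPowerSeries ℕ ℂ) (d : ℕ →₀ ℕ) :
    MvPowerSeries.coeff d (Dop n S)
      = ((d n : ℂ) + 1) * MvPowerSeries.coeff (d + Finsupp.single n 1) S := rfl

lemma prod_shift (g : ℕ → ℕ → ℂ) (hg : ∀ k, g k 0 = 1) (d : ℕ →₀ ℕ) (n : ℕ) :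
    (d + Finsupp.single n 1).prod g = g n (d n + 1) * (d.erase n).prod g := by
  have h1 := Finsupp.mul_prod_erase' (d + Finsupp.single n 1) n g hg
  rw [← h1, Finsupp.erase_add, Finsupp.erase_single, add_zero]
  simp [Finsupp.add_apply, Finsupp.single_eq_same]

lemma prod_unshift (g : ℕ → ℕ → ℂ) (hg : ∀ k, g k 0 = 1) (d : ℕ →₀ ℕ) (n : ℕ) :
    d.prod g = g n (d n) * (d.erase n).prod g :=
  (Finsupp.mul_prod_erase' d n g hg).symm

lemma wH_shift (h : ℕ → ℂ) (d : ℕ →₀ ℕ) (n : ℕ) :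
    wH h (d + Finsupp.single n 1)
      = ((n : ℂ) + 1) * ((d n : ℂ) + 1) * h n * wH h d := by
  set g : ℕ → ℕ → ℂ := fun k e => ((k : ℂ) + 1) ^ e * (e.factorial : ℂ) * h k ^ e with hgdef
  have hg : ∀ k, g k 0 = 1 := by intro k; simp [hgdef]
  show (d + Finsupp.single n 1).prod g = ((n : ℂ) + 1) * ((d n : ℂ) + 1) * h n * d.prod g
  rw [prod_shift g hg d n, prod_unshift g hg d n]
  have : g n (d n + 1) = ((n : ℂ) + 1) * ((d n : ℂ) + 1) * h n * g n (d n) := by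
    simp only [hgdef, pow_succ, Nat.factorial_succ, Nat.cast_mul]
    push_cast
    ring
  rw [this]; ring

lemma Omega_shift (F : ℕ → ℂ) (d : ℕ →₀ ℕ) (n : ℕ) :
    ((d n : ℂ) + 1) * OmegaElt F (d + Finsupp.single n 1)
      = (F n / ((n : ℂ) + 1)) * OmegaElt F d := by
  set g : ℕ → ℕ → ℂ := fun k e => (F k / ((k : ℂ) + 1)) ^ e / (e.factorial : ℂ) with hgdef
  have hg : ∀ k, g k 0 = 1 := by intro k; simp [hgdef]
  show ((d n : ℂ) + 1) * (d + Finsupp.single n 1).prod g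
      = (F n / ((n : ℂ) + 1)) * d.prod g
  rw [prod_shift g hg d n, prod_unshift g hg d n]
  have key : ((d n : ℂ) + 1) * g n (d n + 1) = (F n / ((n : ℂ) + 1)) * g n (d n) := by
    have hdn : ((d n : ℂ) + 1) ≠ 0 := Nat.cast_add_one_ne_zero (d n)
    have helper : ∀ a b p c : ℂ, a ≠ 0 → a * (p * c / (a * b)) = c * (p / b) := by
      intro a b p c ha
      by_cases hb : b = 0
      · simp [hb, ha]
      · field_simp
    simp only [hgdef, pow_succ, Nat.factorial_succ, Nat.cast_mul]
    push_cast
    exact helper _ _ _ _ hdn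
  calc ((d n : ℂ) + 1) * (g n (d n + 1) * (d.erase n).prod g)
      = (((d n : ℂ) + 1) * g n (d n + 1)) * (d.erase n).prod g := by ring
    _ = ((F n / ((n : ℂ) + 1)) * g n (d n)) * (d.erase n).prod g := by rw [key]
    _ = F n / ((n : ℂ) + 1) * (g n (d n) * (d.erase n).prod g) := by ring

lemma Dop_Omega (F : ℕ → ℂ) (n : ℕ) :
    Dop n (OmegaElt F) = (F n / ((n : ℂ) + 1)) • OmegaElt F := by
  funext d
  exact Omega_shift F d n
lemma ps_coeff_mul_X (T : MvPowerSeries ℕ ℂ) (m : ℕ) (e : ℕ →₀ ℕ) :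
    MvPowerSeries.coeff e (T * MvPowerSeries.X m)
      = if Finsupp.single m 1 ≤ e then
          MvPowerSeries.coeff (e - Finsupp.single m 1) T else 0 := by
  have := MvPowerSeries.coeff_mul_monomial (R := ℂ) (m := e) (n := Finsupp.single m 1)
    (φ := T) 1
  simpa [MvPowerSeries.X] using this

lemma Dop_mul_X (n m : ℕ) (T : MvPowerSeries ℕ ℂ) :
    Dop n (T * MvPowerSeries.X m)
      = Dop n T * MvPowerSeries.X m + (if m = n then T else 0) := by
  ext d
  rw [map_add, coeff_Dop, ps_coeff_mul_X, ps_coeff_mul_X,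
    apply_ite (MvPowerSeries.coeff d), map_zero]
  by_cases hmn : m = n
  · subst hmn
    have hle : Finsupp.single m 1 ≤ d + Finsupp.single m 1 := le_add_self
    rw [if_pos hle, if_pos rfl, add_tsub_cancel_right]
    by_cases hd : Finsupp.single m 1 ≤ d
    · rw [if_pos hd, coeff_Dop]
      have h1 : d - Finsupp.single m 1 + Finsupp.single m 1 = d :=
        tsub_add_cancel_of_le hd
      have hdm : 1 ≤ d m := by simpa using hd m
      have h2 : (((d - Finsupp.single m 1 : ℕ →₀ ℕ) m : ℕ) : ℂ) + 1 = (d m : ℂ) := by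
        have he : (d - Finsupp.single m 1 : ℕ →₀ ℕ) m = d m - 1 := by
          rw [Finsupp.tsub_apply, Finsupp.single_eq_same]
        rw [he]
        have := Nat.succ_pred_eq_of_pos hdm
        exact_mod_cast congrArg (Nat.cast (R := ℂ)) this
      rw [h1, h2]
      ring
    · rw [if_neg hd]
      have hdm : d m = 0 := by
        by_contra hc
        refine hd ?_
        intro i
        by_cases hi : i = m
        · subst hi; simpa using Nat.one_le_iff_ne_zero.2 hc
        · simp [Finsupp.single_apply, Ne.symm hi]
      simp [hdm]
  · rw [if_neg hmn]
    have hiff : Finsupp.single m 1 ≤ d + Finsupp.single n 1 ↔ Finsupp.single m 1 ≤ d := by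
      constructor
      · intro hle i
        have hi' := hle i
        by_cases hi : i = m
        · subst hi
          simpa [Finsupp.add_apply, Finsupp.single_apply, Ne.symm hmn] using hi'
        · simp [Finsupp.single_apply, Ne.symm hi]
      · intro hle
        exact le_trans hle (self_le_add_right d _)
    by_cases hd : Finsupp.single m 1 ≤ d
    · rw [if_pos (hiff.2 hd), if_pos hd, coeff_Dop]
      have h1 : d + Finsupp.single n 1 - Finsupp.single m 1
          = d - Finsupp.single m 1 + Finsupp.single n 1 := by
        ext i
        by_cases hi : i = m
        · subst hi
          have h1i : 1 ≤ d i := by simpa using hd i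
          simp only [Finsupp.tsub_apply, Finsupp.add_apply, Finsupp.single_apply]
          simp only [if_pos rfl, if_neg (Ne.symm hmn)]
          omega
        · simp [Finsupp.tsub_apply, Finsupp.add_apply, Finsupp.single_apply, Ne.symm hi]
      have h2 : (d - Finsupp.single m 1 : ℕ →₀ ℕ) n = d n := by
        rw [Finsupp.tsub_apply, Finsupp.single_apply, if_neg hmn, Nat.sub_zero]
      rw [h1, h2, add_zero]
    · rw [if_neg (fun hc => hd (hiff.1 hc)), if_neg hd]
      simp

lemma Dop_add (n : ℕ) (S T : MvPowerSeries ℕ ℂ) :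
    Dop n (S + T) = Dop n S + Dop n T := by
  ext d
  simp only [map_add, coeff_Dop]
  ring

lemma Dop_smul (n : ℕ) (c : ℂ) (S : MvPowerSeries ℕ ℂ) :
    Dop n (c • S) = c • Dop n S := by
  ext d
  simp only [coeff_Dop, LinearMap.map_smul, smul_eq_mul]
  ring

lemma Dop_mul_C (n : ℕ) (S : MvPowerSeries ℕ ℂ) (a : ℂ) :
    Dop n (S * MvPowerSeries.C a) = Dop n S * MvPowerSeries.C a := by
  ext d
  rw [coeff_Dop, MvPowerSeries.coeff_mul_C, MvPowerSeries.coeff_mul_C, coeff_Dop]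
  ring

lemma Dop_C (n : ℕ) (a : ℂ) : Dop n (MvPowerSeries.C a) = 0 := by
  ext d
  rw [coeff_Dop, MvPowerSeries.coeff_C, if_neg, map_zero, mul_zero]
  intro hc
  have := congrArg (fun f : ℕ →₀ ℕ => f n) hc
  simp [Finsupp.add_apply, Finsupp.single_eq_same] at this

lemma Dop_Omega_mul (F : ℕ → ℂ) (n : ℕ) (u : SymFun) :
    Dop n (OmegaElt F * (u : MvPowerSeries ℕ ℂ))
      = (F n / ((n : ℂ) + 1)) • (OmegaElt F * (u : MvPowerSeries ℕ ℂ))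
        + OmegaElt F * Dop n (u : MvPowerSeries ℕ ℂ) := by
  induction u using MvPolynomial.induction_on with
  | C a =>
    rw [coe_C, Dop_mul_C, Dop_Omega, Dop_C, mul_zero, add_zero, smul_mul_assoc]
  | add p q hp hq =>
    rw [coe_add, mul_add, Dop_add, hp, hq, Dop_add, mul_add, smul_add]
    ring
  | mul_X p m hp =>
    rw [coe_mul, coe_X, ← mul_assoc, Dop_mul_X, Dop_mul_X, hp, add_mul, mul_add,
      mul_ite, mul_zero, smul_mul_assoc]
    ring
lemma pderiv_X_of_ne {m n : ℕ} (hmn : m ≠ n) :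
    pderiv n (X m : SymFun) = 0 := by
  rw [pderiv_X]
  simp [Pi.single_apply, Ne.symm hmn]

lemma coe_pderiv (n : ℕ) (u : SymFun) :
    ((pderiv n u : SymFun) : MvPowerSeries ℕ ℂ) = Dop n (u : MvPowerSeries ℕ ℂ) := by
  induction u using MvPolynomial.induction_on with
  | C a =>
    rw [pderiv_C, coe_zero, coe_C, Dop_C]
  | add p q hp hq =>
    rw [map_add, coe_add, hp, hq, coe_add, Dop_add]
  | mul_X p m hp =>
    rw [pderiv_mul, coe_mul, coe_X, Dop_mul_X, coe_add, coe_mul, coe_X, hp]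
    by_cases hmn : m = n
    · subst hmn
      rw [pderiv_X_self, mul_one, if_pos rfl]
    · rw [pderiv_X_of_ne hmn]
      rw [if_neg hmn]
      simp

/-! ### hallH API -/

lemma hallH_eq_sum (h : ℕ → ℂ) (S : MvPowerSeries ℕ ℂ) (Q : SymFun)
    (T : Finset (ℕ →₀ ℕ)) (hT : Q.support ⊆ T) :
    hallH h S Q = ∑ d ∈ T, MvPowerSeries.coeff d S * Q.coeff d * wH h d := by
  rw [hallH_def]
  exact Finset.sum_subset hT fun d _ hd => by
    rw [MvPolynomial.notMem_support_iff.mp hd, mul_zero, zero_mul]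

lemma hallH_add_right (h : ℕ → ℂ) (S : MvPowerSeries ℕ ℂ) (Q₁ Q₂ : SymFun) :
    hallH h S (Q₁ + Q₂) = hallH h S Q₁ + hallH h S Q₂ := by
  classical
  rw [hallH_eq_sum h S (Q₁ + Q₂) (Q₁.support ∪ Q₂.support) MvPolynomial.support_add,
    hallH_eq_sum h S Q₁ (Q₁.support ∪ Q₂.support) Finset.subset_union_left,
    hallH_eq_sum h S Q₂ (Q₁.support ∪ Q₂.support) Finset.subset_union_right,
    ← Finset.sum_add_distrib]
  refine Finset.sum_congr rfl fun d _ => ?_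
  rw [MvPolynomial.coeff_add]
  ring

lemma hallH_C_mul (h : ℕ → ℂ) (S : MvPowerSeries ℕ ℂ) (c : ℂ) (Q : SymFun) :
    hallH h S (C c * Q) = c * hallH h S Q := by
  rw [← MvPolynomial.smul_eq_C_mul,
    hallH_eq_sum h S (c • Q) Q.support (MvPolynomial.support_smul),
    hallH_def, Finset.mul_sum]
  refine Finset.sum_congr rfl fun d _ => ?_
  rw [MvPolynomial.coeff_smul, smul_eq_mul]
  ring

lemma hallH_add_left (h : ℕ → ℂ) (S₁ S₂ : MvPowerSeries ℕ ℂ) (Q : SymFun) :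
    hallH h (S₁ + S₂) Q = hallH h S₁ Q + hallH h S₂ Q := by
  rw [hallH_def, hallH_def, hallH_def, ← Finset.sum_add_distrib]
  refine Finset.sum_congr rfl fun d _ => ?_
  rw [map_add]
  ring

lemma hallH_smul_left (h : ℕ → ℂ) (c : ℂ) (S : MvPowerSeries ℕ ℂ) (Q : SymFun) :
    hallH h (c • S) Q = c * hallH h S Q := by
  rw [hallH_def, hallH_def, Finset.mul_sum]
  refine Finset.sum_congr rfl fun d _ => ?_
  rw [LinearMap.map_smul, smul_eq_mul]
  ring

lemma hallH_C (h : ℕ → ℂ) (S : MvPowerSeries ℕ ℂ) (a : ℂ) :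
    hallH h S (C a : SymFun) = MvPowerSeries.coeff 0 S * a := by
  have hsupp : (C a : SymFun).support ⊆ {(0 : ℕ →₀ ℕ)} := by
    intro d hd
    have := MvPolynomial.mem_support_iff.mp hd
    rw [MvPolynomial.coeff_C] at this
    by_contra hne
    simp only [Finset.mem_singleton] at hne
    rw [if_neg (fun hc => hne hc.symm)] at this
    exact this rfl
  rw [hallH_eq_sum h S (C a) {(0 : ℕ →₀ ℕ)} hsupp, Finset.sum_singleton,
    MvPolynomial.coeff_C, if_pos rfl]
  have : wH h 0 = 1 := Finsupp.prod_zero_index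
  rw [this, mul_one]

lemma hallH_mul_X (h : ℕ → ℂ) (S : MvPowerSeries ℕ ℂ) (Q : SymFun) (n : ℕ) :
    hallH h S (Q * X n) = ((n : ℂ) + 1) * h n * hallH h (Dop n S) Q := by
  rw [hallH_def, hallH_def, support_mul_X, Finset.sum_map, Finset.mul_sum]
  refine Finset.sum_congr rfl fun d _ => ?_
  have hemb : (addRightEmbedding (Finsupp.single n 1)) d = d + Finsupp.single n 1 := rfl
  rw [hemb, MvPolynomial.coeff_mul_X, wH_shift, coeff_Dop]
  ring

lemma Omega_constantCoeff (F : ℕ → ℂ) :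
    MvPowerSeries.coeff (0 : ℕ →₀ ℕ) (OmegaElt F) = 1 := by
  show ((0 : ℕ →₀ ℕ).prod fun k e => (F k / (k + 1)) ^ e / (e.factorial : ℂ)) = 1
  exact Finsupp.prod_zero_index


/-!
STATEMENT 18: for the deformed inner product ( , )_h, the adjoint of
Γ_-(f) (multiplication by Ω(p₁f)) is Γ_+(hf):
(Γ_-(f) u, v)_h = (u, Γ_+(hf) v)_h for all u, v ∈ Λ.
-/
theorem gammaMinus_adjoint (h F : ℕ → ℂ) (u v : SymFun) :
    hallH h (OmegaElt F * (u : MvPowerSeries ℕ ℂ)) v =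
      hallH h ((u : SymFun) : MvPowerSeries ℕ ℂ) (GammaPlusHF h F v) := by
  induction v using MvPolynomial.induction_on generalizing u with
  | C a =>
    have hg : GammaPlusHF h F (C a) = C a := by
      simp [GammaPlusHF, algebraMap_eq]
    rw [hg, hallH_C, hallH_C]
    have : MvPowerSeries.coeff 0 (OmegaElt F * (u : MvPowerSeries ℕ ℂ))
        = MvPowerSeries.coeff 0 ((u : SymFun) : MvPowerSeries ℕ ℂ) := by
      rw [MvPowerSeries.coeff_zero_eq_constantCoeff_apply, map_mul,
        ← MvPowerSeries.coeff_zero_eq_constantCoeff_apply,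
        ← MvPowerSeries.coeff_zero_eq_constantCoeff_apply,
        Omega_constantCoeff, one_mul]
    rw [this]
  | add p q hp hq =>
    rw [hallH_add_right, map_add, hallH_add_right, hp u, hq u]
  | mul_X p n hp =>
    have hne : ((n : ℂ) + 1) ≠ 0 := Nat.cast_add_one_ne_zero n
    have hGX : GammaPlusHF h F (p * X n)
        = GammaPlusHF h F p * X n + C (h n * F n) * GammaPlusHF h F p := by
      rw [map_mul]
      have : GammaPlusHF h F (X n) = X n + C (h n * F n) := aeval_X _ n
      rw [this, mul_add, mul_comm (GammaPlusHF h F p) (C (h n * F n))]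
    rw [hallH_mul_X, Dop_Omega_mul, hallH_add_left, hallH_smul_left,
      ← coe_pderiv, hp u, hp (pderiv n u), hGX, hallH_add_right, hallH_C_mul,
      hallH_mul_X, coe_pderiv]
    field_simp
    ring
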